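/- arXiv:2112.11666 — 4 statements merged into one kernel-verified Lean document; each statement's English description precedes it below -/
import Mathlib

section
/- Let p and q be probability density functions with respect to a measure μ, and let γ ≥ 1, 1 ≤ α ≤ 2, and β be such that 1/α + 1/β = 1. Then the generalized Hellinger distance satisfies D_{γ,H}(P,Q) ≤ 2^{1 - 1/γ + 1/(γα)} D_{γα,H}(P,Q), where D_{γ,H}(P,Q) = ( (1/2) ∫ |p^{1/γ} - q^{1/γ}|^γ dμ )^{1/γ}. -/
open MeasureTheory
open scoped ENNReal NNReal

private lemma aux_abs_rpow_sub_le {α : ℝ} (hα1 : 1 ≤ α) (hα2 : α ≤ 2) {a b : ℝ}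
    (ha : 0 ≤ a) (hb : 0 ≤ b) :
    |a ^ α - b ^ α| ≤ |a - b| * (a ^ (α - 1) + b ^ (α - 1)) := by
  have key : ∀ a b : ℝ, 0 ≤ b → b ≤ a →
      a ^ α - b ^ α ≤ (a - b) * (a ^ (α - 1) + b ^ (α - 1)) := by
    intro a b hb hba
    have ha : 0 ≤ a := hb.trans hba
    rcases ha.eq_or_lt with h0 | ha'
    · have hb0 : b = 0 := le_antisymm (hba.trans h0.symm.le) hb
      simp [hb0, ← h0]
    · have haα : a ^ α = a * a ^ (α - 1) := by
        have h := Real.rpow_add ha' 1 (α - 1)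
        rw [Real.rpow_one] at h
        rw [show (1:ℝ) + (α - 1) = α by ring] at h
        exact h
      rcases hb.eq_or_lt with hb0 | hb'
      · rw [← hb0, Real.zero_rpow (by positivity)]
        have h1 : (0:ℝ) ≤ (0:ℝ) ^ (α - 1) := Real.rpow_nonneg le_rfl _
        nlinarith [haα]
      · have hbα : b ^ α = b * b ^ (α - 1) := by
          have h := Real.rpow_add hb' 1 (α - 1)
          rw [Real.rpow_one] at h
          rw [show (1:ℝ) + (α - 1) = α by ring] at h
          exact h
        have key2 : b * a ^ (α - 1) ≤ a * b ^ (α - 1) := by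
          have h1 : a ^ (α - 1) = a * a ^ (α - 2) := by
            have h := Real.rpow_add ha' 1 (α - 2)
            rw [Real.rpow_one] at h
            rw [show (1:ℝ) + (α - 2) = α - 1 by ring] at h
            exact h
          have h2 : b ^ (α - 1) = b * b ^ (α - 2) := by
            have h := Real.rpow_add hb' 1 (α - 2)
            rw [Real.rpow_one] at h
            rw [show (1:ℝ) + (α - 2) = α - 1 by ring] at h
            exact h
          have h3 : a ^ (α - 2) ≤ b ^ (α - 2) :=
            Real.rpow_le_rpow_of_nonpos hb' hba (by linarith)
          calc b * a ^ (α - 1) = b * a * a ^ (α - 2) := by rw [h1]; ring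
            _ ≤ b * a * b ^ (α - 2) := by
                apply mul_le_mul_of_nonneg_left h3 (by positivity)
            _ = a * b ^ (α - 1) := by rw [h2]; ring
        nlinarith [key2, haα, hbα]
  rcases le_total b a with h | h
  · have h2 : b ^ α ≤ a ^ α := Real.rpow_le_rpow hb h (by linarith)
    rw [abs_of_nonneg (by linarith : (0:ℝ) ≤ a ^ α - b ^ α),
      abs_of_nonneg (by linarith : (0:ℝ) ≤ a - b)]
    exact key a b hb h
  · have h2 : a ^ α ≤ b ^ α := Real.rpow_le_rpow ha h (by linarith)
    rw [abs_sub_comm, abs_sub_comm a b,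
      abs_of_nonneg (by linarith : (0:ℝ) ≤ b ^ α - a ^ α),
      abs_of_nonneg (by linarith : (0:ℝ) ≤ b - a), add_comm]
    exact key b a ha h

private lemma aux_ennreal_add_rpow (a b : ℝ≥0∞) {r : ℝ} (hr : 1 ≤ r) :
    (a + b) ^ r ≤ 2 ^ (r - 1) * (a ^ r + b ^ r) := by
  have h := ENNReal.rpow_arith_mean_le_arith_mean2_rpow (1/2) (1/2) (2*a) (2*b)
    (by rw [← two_mul]; simp [ENNReal.mul_inv_cancel]) hr
  have h2 : ∀ c : ℝ≥0∞, (1/2 : ℝ≥0∞) * (2*c) = c := fun c => by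
    rw [← mul_assoc, one_div, ENNReal.inv_mul_cancel (by norm_num) (by norm_num), one_mul]
  rw [h2, h2] at h
  have h5 : ∀ c : ℝ≥0∞, (1/2 : ℝ≥0∞) * (2*c) ^ r = 2 ^ (r-1) * c ^ r := fun c => by
    rw [ENNReal.mul_rpow_of_nonneg _ _ (by linarith : (0:ℝ) ≤ r), ← mul_assoc]
    congr 1
    rw [one_div, ← ENNReal.rpow_neg_one 2,
      ← ENNReal.rpow_add _ _ (by norm_num) (by norm_num)]
    congr 1
    ring
  rw [h5, h5] at h
  rw [mul_add]
  exact h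

/-- Let `p` and `q` be probability density functions with respect to a measure `μ`,
let `γ ≥ 1`, `1 ≤ α ≤ 2`, and `β` with `1/α + 1/β = 1`.  Then the generalized
Hellinger distance satisfies
`D_{γ,H}(P,Q) ≤ 2^(1 - 1/γ + 1/(γα)) * D_{γα,H}(P,Q)`, where
`D_{γ,H}(P,Q) = ((1/2) ∫ |p^(1/γ) - q^(1/γ)|^γ dμ)^(1/γ)`. -/
theorem generalizedHellinger_le_rpow_mul_generalizedHellinger
    {X : Type*} [MeasurableSpace X] (μ : Measure X) [SigmaFinite μ]
    (p q : X → ℝ) (hpm : Measurable p) (hqm : Measurable q)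
    (hp0 : ∀ x, 0 ≤ p x) (hq0 : ∀ x, 0 ≤ q x)
    (hp1 : ∫ x, p x ∂μ = 1) (hq1 : ∫ x, q x ∂μ = 1)
    (γ α β : ℝ) (hγ : 1 ≤ γ) (hα1 : 1 ≤ α) (hα2 : α ≤ 2)
    (hsum : 1 / α + 1 / β = 1) :
    ((1 / 2) * ∫ x, |p x ^ (1 / γ) - q x ^ (1 / γ)| ^ γ ∂μ) ^ (1 / γ)
      ≤ 2 ^ (1 - 1 / γ + 1 / (γ * α)) *
        ((1 / 2) * ∫ x, |p x ^ (1 / (γ * α)) - q x ^ (1 / (γ * α))| ^ (γ * α) ∂μ)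
          ^ (1 / (γ * α)) := by
  have hγ0 : (0:ℝ) < γ := by linarith
  have hF0 : ∀ x, (0:ℝ) ≤ |p x ^ (1/γ) - q x ^ (1/γ)| ^ γ :=
    fun x => Real.rpow_nonneg (abs_nonneg _) _
  have hG0 : ∀ x, (0:ℝ) ≤ |p x ^ (1/(γ*α)) - q x ^ (1/(γ*α))| ^ (γ*α) :=
    fun x => Real.rpow_nonneg (abs_nonneg _) _
  have hFint_nonneg : 0 ≤ ∫ x, |p x ^ (1/γ) - q x ^ (1/γ)| ^ γ ∂μ := integral_nonneg hF0
  have hGint_nonneg : 0 ≤ ∫ x, |p x ^ (1/(γ*α)) - q x ^ (1/(γ*α))| ^ (γ*α) ∂μ :=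
    integral_nonneg hG0
  rcases eq_or_lt_of_le hα1 with hαeq | hα
  · -- case α = 1
    subst hαeq
    simp only [mul_one]
    rw [show (1:ℝ) - 1/γ + 1/γ = 1 by ring, Real.rpow_one]
    have hT : (0:ℝ) ≤ ((1/2) * ∫ x, |p x ^ (1/γ) - q x ^ (1/γ)| ^ γ ∂μ) ^ (1/γ) :=
      Real.rpow_nonneg (mul_nonneg (by norm_num) hFint_nonneg) _
    linarith
  · -- case 1 < α
    have hα0 : (0:ℝ) < α := by linarith
    have hγα : (0:ℝ) < γ * α := by positivity
    have hβ1 : 1/β = 1 - 1/α := by linarith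
    have hαinv1 : 1/α < 1 := by rw [div_lt_one hα0]; linarith
    have hαinv0 : (0:ℝ) < 1/α := by positivity
    have hβinv : (0:ℝ) < 1/β := by rw [hβ1]; linarith
    have hβ0 : (0:ℝ) < β := one_div_pos.mp hβinv
    have hβgt1 : 1 < β := by
      have h : 1/β < 1 := by rw [hβ1]; linarith
      rwa [div_lt_one hβ0] at h
    have hαβ : (α - 1) * β = α := by
      have h2 : (α-1)/α = 1/β := by rw [hβ1]; field_simp
      field_simp at h2
      linarith
    have hconj : Real.HolderConjugate α β := Real.holderConjugate_iff.mpr ⟨hα, by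
      rw [← one_div, ← one_div]; exact hsum⟩
    have hγβ1 : 1 ≤ γ * β := by nlinarith
    -- measurability helpers
    have hrpow : ∀ (c:ℝ), 0 ≤ c → ∀ {f : X → ℝ}, Measurable f →
        Measurable (fun x => f x ^ c) := fun c hc f hf =>
      (Real.continuous_rpow_const hc).measurable.comp hf
    have hea : (0:ℝ) ≤ 1/(γ*α) := le_of_lt (one_div_pos.mpr hγα)
    have heg : (0:ℝ) ≤ 1/γ := le_of_lt (one_div_pos.mpr hγ0)
    have heb : (0:ℝ) ≤ (α-1)/(γ*α) := div_nonneg (by linarith) hγα.le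
    have hgm : Measurable (fun x => |p x ^ (1/(γ*α)) - q x ^ (1/(γ*α))|) :=
      ((hrpow _ hea hpm).sub (hrpow _ hea hqm)).abs
    have hwm : Measurable (fun x => p x ^ ((α-1)/(γ*α)) + q x ^ ((α-1)/(γ*α))) :=
      (hrpow _ heb hpm).add (hrpow _ heb hqm)
    have hFm : Measurable (fun x => |p x ^ (1/γ) - q x ^ (1/γ)| ^ γ) :=
      hrpow _ hγ0.le (((hrpow _ heg hpm).sub (hrpow _ heg hqm)).abs)
    have hGm : Measurable (fun x => |p x ^ (1/(γ*α)) - q x ^ (1/(γ*α))| ^ (γ*α)) :=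
      hrpow _ hγα.le hgm
    -- integrability of p, q and their lintegrals
    have hpint : Integrable p μ := by
      by_contra h
      rw [integral_undef h] at hp1
      exact one_ne_zero hp1.symm
    have hqint : Integrable q μ := by
      by_contra h
      rw [integral_undef h] at hq1
      exact one_ne_zero hq1.symm
    have hlp : ∫⁻ x, ENNReal.ofReal (p x) ∂μ = 1 := by
      rw [← ofReal_integral_eq_lintegral_ofReal hpint (ae_of_all _ hp0), hp1, ENNReal.ofReal_one]
    have hlq : ∫⁻ x, ENNReal.ofReal (q x) ∂μ = 1 := by
      rw [← ofReal_integral_eq_lintegral_ofReal hqint (ae_of_all _ hq0), hq1, ENNReal.ofReal_one]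
    -- pointwise bound
    have hptF : ∀ x, |p x ^ (1/γ) - q x ^ (1/γ)| ^ γ ≤
        (|p x ^ (1/(γ*α)) - q x ^ (1/(γ*α))| ^ γ) *
          ((p x ^ ((α-1)/(γ*α)) + q x ^ ((α-1)/(γ*α))) ^ γ) := by
      intro x
      rw [← Real.mul_rpow (abs_nonneg _)
        (add_nonneg (Real.rpow_nonneg (hp0 x) _) (Real.rpow_nonneg (hq0 x) _))]
      apply Real.rpow_le_rpow (abs_nonneg _) _ hγ0.le
      have e1 : p x ^ (1/γ) = (p x ^ (1/(γ*α))) ^ α := by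
        rw [← Real.rpow_mul (hp0 x)]
        congr 1
        field_simp
      have e2 : q x ^ (1/γ) = (q x ^ (1/(γ*α))) ^ α := by
        rw [← Real.rpow_mul (hq0 x)]
        congr 1
        field_simp
      rw [e1, e2]
      calc |(p x ^ (1/(γ*α))) ^ α - (q x ^ (1/(γ*α))) ^ α|
          ≤ |p x ^ (1/(γ*α)) - q x ^ (1/(γ*α))| *
            ((p x ^ (1/(γ*α))) ^ (α-1) + (q x ^ (1/(γ*α))) ^ (α-1)) :=
          aux_abs_rpow_sub_le hα1 hα2 (Real.rpow_nonneg (hp0 x) _) (Real.rpow_nonneg (hq0 x) _)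
        _ = |p x ^ (1/(γ*α)) - q x ^ (1/(γ*α))| *
            (p x ^ ((α-1)/(γ*α)) + q x ^ ((α-1)/(γ*α))) := by
          rw [← Real.rpow_mul (hp0 x), ← Real.rpow_mul (hq0 x),
            show 1/(γ*α)*(α-1) = (α-1)/(γ*α) by ring]
    -- pointwise bound for G
    have hGle : ∀ x, |p x ^ (1/(γ*α)) - q x ^ (1/(γ*α))| ^ (γ*α) ≤ p x + q x := by
      intro x
      have hup : (p x ^ (1/(γ*α))) ^ (γ*α) = p x := by
        rw [← Real.rpow_mul (hp0 x), one_div_mul_cancel (ne_of_gt hγα), Real.rpow_one]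
      have hvq : (q x ^ (1/(γ*α))) ^ (γ*α) = q x := by
        rw [← Real.rpow_mul (hq0 x), one_div_mul_cancel (ne_of_gt hγα), Real.rpow_one]
      rcases le_total (q x ^ (1/(γ*α))) (p x ^ (1/(γ*α))) with h|h
      · have h1 : |p x ^ (1/(γ*α)) - q x ^ (1/(γ*α))| ≤ p x ^ (1/(γ*α)) := by
          rw [abs_of_nonneg (by linarith)]
          have := Real.rpow_nonneg (hq0 x) (1/(γ*α))
          linarith
        have h2 := Real.rpow_le_rpow (abs_nonneg _) h1 hγα.le
        rw [hup] at h2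
        linarith [hq0 x]
      · have h1 : |p x ^ (1/(γ*α)) - q x ^ (1/(γ*α))| ≤ q x ^ (1/(γ*α)) := by
          rw [abs_sub_comm, abs_of_nonneg (by linarith)]
          have := Real.rpow_nonneg (hp0 x) (1/(γ*α))
          linarith
        have h2 := Real.rpow_le_rpow (abs_nonneg _) h1 hγα.le
        rw [hvq] at h2
        linarith [hp0 x]
    -- lintegral of G is at most 2
    have hIGle : ∫⁻ x, ENNReal.ofReal (|p x ^ (1/(γ*α)) - q x ^ (1/(γ*α))| ^ (γ*α)) ∂μ
        ≤ 2 := by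
      calc ∫⁻ x, ENNReal.ofReal (|p x ^ (1/(γ*α)) - q x ^ (1/(γ*α))| ^ (γ*α)) ∂μ
          ≤ ∫⁻ x, (ENNReal.ofReal (p x) + ENNReal.ofReal (q x)) ∂μ := by
            apply lintegral_mono
            intro x
            dsimp only
            rw [← ENNReal.ofReal_add (hp0 x) (hq0 x)]
            exact ENNReal.ofReal_le_ofReal (hGle x)
        _ = 1 + 1 := by
            rw [lintegral_add_left hpm.ennreal_ofReal, hlp, hlq]
        _ = 2 := one_add_one_eq_two
    have hIGne : (∫⁻ x, ENNReal.ofReal (|p x ^ (1/(γ*α)) - q x ^ (1/(γ*α))| ^ (γ*α)) ∂μ) ≠ ⊤ :=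
      (lt_of_le_of_lt hIGle (lt_top_iff_ne_top.mpr ENNReal.ofNat_ne_top)).ne
    -- Hölder
    have hΦα : ∫⁻ x, ENNReal.ofReal (|p x ^ (1/(γ*α)) - q x ^ (1/(γ*α))| ^ γ) ^ α ∂μ
        = ∫⁻ x, ENNReal.ofReal (|p x ^ (1/(γ*α)) - q x ^ (1/(γ*α))| ^ (γ*α)) ∂μ :=
      lintegral_congr fun x => by
        rw [ENNReal.ofReal_rpow_of_nonneg (Real.rpow_nonneg (abs_nonneg _) _) hα0.le,
          ← Real.rpow_mul (abs_nonneg _)]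
    have hexp1 : (α-1)/(γ*α) * (γ*β) = 1 := by
      rw [div_mul_eq_mul_div, div_eq_one_iff_eq (ne_of_gt hγα)]
      nlinarith [hαβ]
    have hΨpt : ∀ x, ENNReal.ofReal ((p x ^ ((α-1)/(γ*α)) + q x ^ ((α-1)/(γ*α))) ^ γ) ^ β
        ≤ 2 ^ (γ*β - 1) * (ENNReal.ofReal (p x) + ENNReal.ofReal (q x)) := by
      intro x
      have hwnn : (0:ℝ) ≤ p x ^ ((α-1)/(γ*α)) + q x ^ ((α-1)/(γ*α)) :=
        add_nonneg (Real.rpow_nonneg (hp0 x) _) (Real.rpow_nonneg (hq0 x) _)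
      rw [ENNReal.ofReal_rpow_of_nonneg (Real.rpow_nonneg hwnn _) hβ0.le,
        ← Real.rpow_mul hwnn]
      rw [← ENNReal.ofReal_rpow_of_nonneg hwnn (mul_nonneg hγ0.le hβ0.le)]
      rw [ENNReal.ofReal_add (Real.rpow_nonneg (hp0 x) _) (Real.rpow_nonneg (hq0 x) _)]
      refine (aux_ennreal_add_rpow _ _ hγβ1).trans ?_
      apply mul_le_mul_right
      have hp' : ENNReal.ofReal (p x ^ ((α-1)/(γ*α))) ^ (γ*β) = ENNReal.ofReal (p x) := by
        rw [ENNReal.ofReal_rpow_of_nonneg (Real.rpow_nonneg (hp0 x) _) (by positivity),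
          ← Real.rpow_mul (hp0 x), hexp1, Real.rpow_one]
      have hq' : ENNReal.ofReal (q x ^ ((α-1)/(γ*α))) ^ (γ*β) = ENNReal.ofReal (q x) := by
        rw [ENNReal.ofReal_rpow_of_nonneg (Real.rpow_nonneg (hq0 x) _) (by positivity),
          ← Real.rpow_mul (hq0 x), hexp1, Real.rpow_one]
      rw [hp', hq']
    have hΨint : ∫⁻ x, ENNReal.ofReal ((p x ^ ((α-1)/(γ*α)) + q x ^ ((α-1)/(γ*α))) ^ γ) ^ β ∂μ
        ≤ 2 ^ (γ*β) := by
      calc ∫⁻ x, ENNReal.ofReal ((p x ^ ((α-1)/(γ*α)) + q x ^ ((α-1)/(γ*α))) ^ γ) ^ β ∂μ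
          ≤ ∫⁻ x, 2 ^ (γ*β - 1) * (ENNReal.ofReal (p x) + ENNReal.ofReal (q x)) ∂μ :=
            lintegral_mono hΨpt
        _ = 2 ^ (γ*β - 1) * ((∫⁻ x, ENNReal.ofReal (p x) ∂μ) + ∫⁻ x, ENNReal.ofReal (q x) ∂μ) := by
            rw [lintegral_const_mul _ (f := fun x => ENNReal.ofReal (p x) + ENNReal.ofReal (q x)) (hpm.ennreal_ofReal.add hqm.ennreal_ofReal),
              lintegral_add_left hpm.ennreal_ofReal]
        _ = 2 ^ (γ*β - 1) * 2 := by rw [hlp, hlq]; norm_num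
        _ = 2 ^ (γ*β) := by
            calc (2:ℝ≥0∞) ^ (γ*β - 1) * 2 = 2 ^ (γ*β - 1) * 2 ^ (1:ℝ) := by
                  rw [ENNReal.rpow_one]
              _ = 2 ^ (γ*β - 1 + 1) := (ENNReal.rpow_add _ _ (by norm_num) (by norm_num)).symm
              _ = 2 ^ (γ*β) := by congr 1; ring
    have hmain : ∫⁻ x, ENNReal.ofReal (|p x ^ (1/γ) - q x ^ (1/γ)| ^ γ) ∂μ
        ≤ (∫⁻ x, ENNReal.ofReal (|p x ^ (1/(γ*α)) - q x ^ (1/(γ*α))| ^ (γ*α)) ∂μ) ^ (1/α)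
          * 2 ^ γ := by
      have hH := ENNReal.lintegral_mul_le_Lp_mul_Lq μ hconj
        (f := fun x => ENNReal.ofReal (|p x ^ (1/(γ*α)) - q x ^ (1/(γ*α))| ^ γ))
        (g := fun x => ENNReal.ofReal ((p x ^ ((α-1)/(γ*α)) + q x ^ ((α-1)/(γ*α))) ^ γ))
        ((hrpow _ hγ0.le hgm).ennreal_ofReal.aemeasurable)
        ((hrpow _ hγ0.le hwm).ennreal_ofReal.aemeasurable)
      calc ∫⁻ x, ENNReal.ofReal (|p x ^ (1/γ) - q x ^ (1/γ)| ^ γ) ∂μ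
          ≤ ∫⁻ x, ENNReal.ofReal (|p x ^ (1/(γ*α)) - q x ^ (1/(γ*α))| ^ γ)
              * ENNReal.ofReal ((p x ^ ((α-1)/(γ*α)) + q x ^ ((α-1)/(γ*α))) ^ γ) ∂μ := by
            apply lintegral_mono
            intro x
            dsimp only
            rw [← ENNReal.ofReal_mul (Real.rpow_nonneg (abs_nonneg _) _)]
            exact ENNReal.ofReal_le_ofReal (hptF x)
        _ ≤ (∫⁻ x, ENNReal.ofReal (|p x ^ (1/(γ*α)) - q x ^ (1/(γ*α))| ^ γ) ^ α ∂μ) ^ (1/α)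
            * (∫⁻ x, ENNReal.ofReal ((p x ^ ((α-1)/(γ*α)) + q x ^ ((α-1)/(γ*α))) ^ γ) ^ β ∂μ)
              ^ (1/β) := hH
        _ ≤ (∫⁻ x, ENNReal.ofReal (|p x ^ (1/(γ*α)) - q x ^ (1/(γ*α))| ^ (γ*α)) ∂μ) ^ (1/α)
            * ((2:ℝ≥0∞) ^ (γ*β)) ^ (1/β) := by
            rw [hΦα]
            exact mul_le_mul_right (ENNReal.rpow_le_rpow hΨint (by positivity)) _
        _ = _ := by
            congr 1
            rw [← ENNReal.rpow_mul]
            congr 1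
            field_simp
    have hRne : (∫⁻ x, ENNReal.ofReal (|p x ^ (1/(γ*α)) - q x ^ (1/(γ*α))| ^ (γ*α)) ∂μ) ^ (1/α)
        * (2:ℝ≥0∞) ^ γ ≠ ⊤ :=
      ENNReal.mul_ne_top (ENNReal.rpow_ne_top_of_nonneg (by positivity) hIGne)
        (ENNReal.rpow_ne_top_of_nonneg hγ0.le ENNReal.ofNat_ne_top)
    have hFeq : ∫ x, |p x ^ (1/γ) - q x ^ (1/γ)| ^ γ ∂μ
        = (∫⁻ x, ENNReal.ofReal (|p x ^ (1/γ) - q x ^ (1/γ)| ^ γ) ∂μ).toReal :=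
      integral_eq_lintegral_of_nonneg_ae (ae_of_all _ hF0) hFm.aestronglyMeasurable
    have hGeq : ∫ x, |p x ^ (1/(γ*α)) - q x ^ (1/(γ*α))| ^ (γ*α) ∂μ
        = (∫⁻ x, ENNReal.ofReal (|p x ^ (1/(γ*α)) - q x ^ (1/(γ*α))| ^ (γ*α)) ∂μ).toReal :=
      integral_eq_lintegral_of_nonneg_ae (ae_of_all _ hG0) hGm.aestronglyMeasurable
    have hkey : ∫ x, |p x ^ (1/γ) - q x ^ (1/γ)| ^ γ ∂μ
        ≤ 2 ^ γ * (∫ x, |p x ^ (1/(γ*α)) - q x ^ (1/(γ*α))| ^ (γ*α) ∂μ) ^ (1/α) := by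
      rw [hFeq, hGeq, mul_comm]
      have h := ENNReal.toReal_mono hRne hmain
      rw [ENNReal.toReal_mul, ← ENNReal.toReal_rpow, ← ENNReal.toReal_rpow] at h
      simpa using h
    have hB := hGint_nonneg
    have two_pos' : (0:ℝ) < 2 := by norm_num
    have c1 : (1/2:ℝ) * 2 ^ γ = 2 ^ (γ-1) := by
      rw [show (1/2:ℝ) = 2 ^ (-1:ℝ) by rw [Real.rpow_neg_one]; norm_num,
        ← Real.rpow_add two_pos']
      congr 1; ring
    have c2 : ((1/2:ℝ)) ^ (1/(γ*α)) = 2 ^ (-(1/(γ*α))) := by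
      rw [show (1/2:ℝ) = 2 ^ (-1:ℝ) by rw [Real.rpow_neg_one]; norm_num,
        ← Real.rpow_mul (by norm_num : (0:ℝ) ≤ 2)]
      congr 1; ring
    calc ((1/2) * ∫ x, |p x ^ (1/γ) - q x ^ (1/γ)| ^ γ ∂μ) ^ (1/γ)
        ≤ ((1/2) * (2 ^ γ *
            (∫ x, |p x ^ (1/(γ*α)) - q x ^ (1/(γ*α))| ^ (γ*α) ∂μ) ^ (1/α))) ^ (1/γ) := by
          apply Real.rpow_le_rpow (mul_nonneg (by norm_num) hFint_nonneg)
            (mul_le_mul_of_nonneg_left hkey (by norm_num)) (by positivity)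
      _ = 2 ^ (1 - 1/γ + 1/(γ*α)) *
          ((1/2) * ∫ x, |p x ^ (1/(γ*α)) - q x ^ (1/(γ*α))| ^ (γ*α) ∂μ) ^ (1/(γ*α)) := by
          have e1 : ((1/2:ℝ) * (2 ^ γ *
              (∫ x, |p x ^ (1/(γ*α)) - q x ^ (1/(γ*α))| ^ (γ*α) ∂μ) ^ (1/α))) ^ (1/γ)
              = 2 ^ (1 - 1/γ) *
                (∫ x, |p x ^ (1/(γ*α)) - q x ^ (1/(γ*α))| ^ (γ*α) ∂μ) ^ (1/(γ*α)) := by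
            rw [← mul_assoc, c1,
              Real.mul_rpow (Real.rpow_nonneg two_pos'.le _) (Real.rpow_nonneg hB _),
              ← Real.rpow_mul two_pos'.le, ← Real.rpow_mul hB]
            congr 1
            · congr 1
              field_simp
            · congr 1
              ring
          have e2 : (2:ℝ) ^ (1 - 1/γ + 1/(γ*α)) *
              ((1/2) * ∫ x, |p x ^ (1/(γ*α)) - q x ^ (1/(γ*α))| ^ (γ*α) ∂μ) ^ (1/(γ*α))
              = 2 ^ (1 - 1/γ) *
                (∫ x, |p x ^ (1/(γ*α)) - q x ^ (1/(γ*α))| ^ (γ*α) ∂μ) ^ (1/(γ*α)) := by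
            rw [Real.mul_rpow (by norm_num : (0:ℝ) ≤ 1/2) hB, c2, ← mul_assoc,
              ← Real.rpow_add two_pos']
            congr 1
            congr 1
            ring
          rw [e1, ← e2]
end

section
/- For probability measures P, Q with densities p, q with respect to μ, and any 1 ≤ γ₁ ≤ γ₂, the generalized Hellinger distances satisfy the monotonicity D_{γ₂,H}(P,Q)^{γ₂} ≤ D_{γ₁,H}(P,Q)^{γ₁}. -/
open MeasureTheory

lemma my_real_rpow_add_le_add_rpow {a b s : ℝ} (ha : 0 ≤ a) (hb : 0 ≤ b)
    (hs0 : 0 ≤ s) (hs1 : s ≤ 1) : (a + b) ^ s ≤ a ^ s + b ^ s := by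
  have h := NNReal.rpow_add_le_add_rpow (⟨a, ha⟩ : NNReal) ⟨b, hb⟩ hs0 hs1
  have h2 := NNReal.coe_le_coe.2 h
  exact h2

lemma my_abs_rpow_sub_rpow_le {u v s : ℝ} (hu : 0 ≤ u) (hv : 0 ≤ v)
    (hs0 : 0 ≤ s) (hs1 : s ≤ 1) : |u ^ s - v ^ s| ≤ |u - v| ^ s := by
  have key : ∀ a b : ℝ, 0 ≤ a → 0 ≤ b → b ≤ a → |a ^ s - b ^ s| ≤ |a - b| ^ s := by
    intro a b ha hb hba
    rw [abs_of_nonneg (sub_nonneg.2 (Real.rpow_le_rpow hb hba hs0)),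
      abs_of_nonneg (sub_nonneg.2 hba), sub_le_iff_le_add]
    calc a ^ s = ((a - b) + b) ^ s := by ring_nf
    _ ≤ (a - b) ^ s + b ^ s :=
      my_real_rpow_add_le_add_rpow (sub_nonneg.2 hba) hb hs0 hs1
  rcases le_total v u with h | h
  · exact key u v hu hv h
  · rw [abs_sub_comm, abs_sub_comm u v]
    exact key v u hv hu h

/-- Pointwise monotonicity of the Hellinger integrand. -/
lemma my_pointwise {a b γ₁ γ₂ : ℝ} (ha : 0 ≤ a) (hb : 0 ≤ b)
    (hγ₁ : 1 ≤ γ₁) (hγ : γ₁ ≤ γ₂) :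
    |a ^ (1 / γ₂) - b ^ (1 / γ₂)| ^ γ₂ ≤ |a ^ (1 / γ₁) - b ^ (1 / γ₁)| ^ γ₁ := by
  have h1 : (0 : ℝ) < γ₁ := lt_of_lt_of_le one_pos hγ₁
  have h2 : (0 : ℝ) < γ₂ := lt_of_lt_of_le h1 hγ
  set s : ℝ := γ₁ / γ₂ with hs
  have hs0 : 0 ≤ s := le_of_lt (div_pos h1 h2)
  have hs1 : s ≤ 1 := (div_le_one h2).2 hγ
  have hexp : ∀ c : ℝ, 0 ≤ c → c ^ (1 / γ₂) = (c ^ (1 / γ₁)) ^ s := by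
    intro c hc
    rw [← Real.rpow_mul hc]
    congr 1
    rw [hs]
    field_simp
  rw [hexp a ha, hexp b hb]
  calc |(a ^ (1 / γ₁)) ^ s - (b ^ (1 / γ₁)) ^ s| ^ γ₂
      ≤ (|a ^ (1 / γ₁) - b ^ (1 / γ₁)| ^ s) ^ γ₂ := by
        apply Real.rpow_le_rpow (abs_nonneg _) _ h2.le
        exact my_abs_rpow_sub_rpow_le (Real.rpow_nonneg ha _) (Real.rpow_nonneg hb _) hs0 hs1
    _ = |a ^ (1 / γ₁) - b ^ (1 / γ₁)| ^ (s * γ₂) := by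
        rw [← Real.rpow_mul (abs_nonneg _)]
    _ = |a ^ (1 / γ₁) - b ^ (1 / γ₁)| ^ γ₁ := by
        rw [hs, div_mul_cancel₀ _ h2.ne']

/-- For probability measures with densities `p, q` with respect to `μ` and any
`1 ≤ γ₁ ≤ γ₂`, the generalized Hellinger distances satisfy the monotonicity
`D_{γ₂,H}(P,Q)^γ₂ ≤ D_{γ₁,H}(P,Q)^γ₁`, where
`D_{γ,H}(P,Q) = ((1/2) ∫ |p^(1/γ) - q^(1/γ)|^γ dμ)^(1/γ)`. -/
theorem generalizedHellinger_rpow_monotone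
    {X : Type*} [MeasurableSpace X] (μ : Measure X) [SigmaFinite μ]
    (p q : X → ℝ) (hpm : Measurable p) (hqm : Measurable q)
    (hp0 : ∀ x, 0 ≤ p x) (hq0 : ∀ x, 0 ≤ q x)
    (hp1 : ∫ x, p x ∂μ = 1) (hq1 : ∫ x, q x ∂μ = 1)
    (γ₁ γ₂ : ℝ) (hγ₁ : 1 ≤ γ₁) (hγ : γ₁ ≤ γ₂) :
    (((1 / 2) * ∫ x, |p x ^ (1 / γ₂) - q x ^ (1 / γ₂)| ^ γ₂ ∂μ) ^ (1 / γ₂)) ^ γ₂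
      ≤ (((1 / 2) * ∫ x, |p x ^ (1 / γ₁) - q x ^ (1 / γ₁)| ^ γ₁ ∂μ) ^ (1 / γ₁)) ^ γ₁ := by
  have h1 : (0 : ℝ) < γ₁ := lt_of_lt_of_le one_pos hγ₁
  have h2 : (0 : ℝ) < γ₂ := lt_of_lt_of_le h1 hγ
  have hip : Integrable p μ := by
    by_contra h
    rw [integral_undef h] at hp1
    norm_num at hp1
  have hiq : Integrable q μ := by
    by_contra h
    rw [integral_undef h] at hq1
    norm_num at hq1
  -- pointwise bound : integrand ≤ p + q
  have hbound : ∀ (γ : ℝ), 0 < γ → ∀ x,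
      |p x ^ (1 / γ) - q x ^ (1 / γ)| ^ γ ≤ p x + q x := by
    intro γ hγpos x
    have hm : |p x ^ (1 / γ) - q x ^ (1 / γ)| ≤ max (p x) (q x) ^ (1 / γ) := by
      rw [abs_sub_le_iff]
      constructor
      · have := Real.rpow_le_rpow (hp0 x) (le_max_left (p x) (q x))
          (by positivity : (0:ℝ) ≤ 1 / γ)
        have hq' : (0:ℝ) ≤ q x ^ (1 / γ) := Real.rpow_nonneg (hq0 x) _
        linarith
      · have := Real.rpow_le_rpow (hq0 x) (le_max_right (p x) (q x))
          (by positivity : (0:ℝ) ≤ 1 / γ)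
        have hp' : (0:ℝ) ≤ p x ^ (1 / γ) := Real.rpow_nonneg (hp0 x) _
        linarith
    calc |p x ^ (1 / γ) - q x ^ (1 / γ)| ^ γ
        ≤ (max (p x) (q x) ^ (1 / γ)) ^ γ :=
          Real.rpow_le_rpow (abs_nonneg _) hm hγpos.le
      _ = max (p x) (q x) := by
          rw [one_div, Real.rpow_inv_rpow (le_max_of_le_left (hp0 x)) hγpos.ne']
      _ ≤ p x + q x := by
          rcases le_total (p x) (q x) with h | h
          · rw [max_eq_right h]; linarith [hp0 x]
          · rw [max_eq_left h]; linarith [hq0 x]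
  have hmeas : ∀ (γ : ℝ), 0 < γ → AEStronglyMeasurable
      (fun x => |p x ^ (1 / γ) - q x ^ (1 / γ)| ^ γ) μ := by
    intro γ hγpos
    have m1 : Measurable fun x => p x ^ (1 / γ) :=
      (Real.continuous_rpow_const (by positivity)).measurable.comp hpm
    have m2 : Measurable fun x => q x ^ (1 / γ) :=
      (Real.continuous_rpow_const (by positivity)).measurable.comp hqm
    exact ((Real.continuous_rpow_const hγpos.le).measurable.comp
      (m1.sub m2).abs).aestronglyMeasurable
  have hint1 : Integrable (fun x => |p x ^ (1 / γ₁) - q x ^ (1 / γ₁)| ^ γ₁) μ := by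
    refine (hip.add hiq).mono' (hmeas γ₁ h1) (Filter.Eventually.of_forall fun x => ?_)
    rw [Real.norm_eq_abs, abs_of_nonneg (Real.rpow_nonneg (abs_nonneg _) _)]
    exact hbound γ₁ h1 x
  have hImono : (∫ x, |p x ^ (1 / γ₂) - q x ^ (1 / γ₂)| ^ γ₂ ∂μ)
      ≤ ∫ x, |p x ^ (1 / γ₁) - q x ^ (1 / γ₁)| ^ γ₁ ∂μ := by
    refine integral_mono_of_nonneg (Filter.Eventually.of_forall fun x =>
      Real.rpow_nonneg (abs_nonneg _) _) hint1 (Filter.Eventually.of_forall fun x => ?_)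
    exact my_pointwise (hp0 x) (hq0 x) hγ₁ hγ
  have hnn2 : (0:ℝ) ≤ (1 / 2) * ∫ x, |p x ^ (1 / γ₂) - q x ^ (1 / γ₂)| ^ γ₂ ∂μ := by
    have : (0:ℝ) ≤ ∫ x, |p x ^ (1 / γ₂) - q x ^ (1 / γ₂)| ^ γ₂ ∂μ :=
      integral_nonneg fun x => Real.rpow_nonneg (abs_nonneg _) _
    linarith
  have hnn1 : (0:ℝ) ≤ (1 / 2) * ∫ x, |p x ^ (1 / γ₁) - q x ^ (1 / γ₁)| ^ γ₁ ∂μ := by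
    have : (0:ℝ) ≤ ∫ x, |p x ^ (1 / γ₁) - q x ^ (1 / γ₁)| ^ γ₁ ∂μ :=
      integral_nonneg fun x => Real.rpow_nonneg (abs_nonneg _) _
    linarith
  have he2 : (((1 / 2) * ∫ x, |p x ^ (1 / γ₂) - q x ^ (1 / γ₂)| ^ γ₂ ∂μ) ^ (1 / γ₂)) ^ γ₂
      = (1 / 2) * ∫ x, |p x ^ (1 / γ₂) - q x ^ (1 / γ₂)| ^ γ₂ ∂μ := by
    simp only [one_div] at hnn2 ⊢
    exact Real.rpow_inv_rpow hnn2 h2.ne'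
  have he1 : (((1 / 2) * ∫ x, |p x ^ (1 / γ₁) - q x ^ (1 / γ₁)| ^ γ₁ ∂μ) ^ (1 / γ₁)) ^ γ₁
      = (1 / 2) * ∫ x, |p x ^ (1 / γ₁) - q x ^ (1 / γ₁)| ^ γ₁ ∂μ := by
    simp only [one_div] at hnn1 ⊢
    exact Real.rpow_inv_rpow hnn1 h1.ne'
  rw [he2, he1]
  linarith
end

section
/- Suppose γ > 2 satisfies 2^k < γ ≤ 2^{k+1} for some positive integer k. Then the Hellinger distance is bounded as D_H(P,Q) ≤ 2^k D_{γ,H}(P,Q). -/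
open MeasureTheory

/-- Mean value type inequality for rpow. -/
lemma rpow_sub_rpow_le_aux {a b s : ℝ} (ha : 0 ≤ a) (hab : a ≤ b) (hs : 1 ≤ s) :
    b ^ s - a ^ s ≤ s * b ^ (s - 1) * (b - a) := by
  rcases eq_or_lt_of_le (ha.trans hab) with hb | hb
  · have ha0 : a = 0 := le_antisymm (hab.trans hb.symm.le) ha
    have hs0 : s ≠ 0 := by linarith
    simp [← hb, ha0, Real.zero_rpow hs0]
  · have ht0 : 0 ≤ a / b := div_nonneg ha hb.le
    have ht1 : a / b ≤ 1 := (div_le_one hb).2 hab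
    have hbern : 1 + s * (a / b - 1) ≤ (1 + (a / b - 1)) ^ s :=
      one_add_mul_self_le_rpow_one_add (by linarith) hs
    rw [show 1 + (a / b - 1) = a / b by ring] at hbern
    have hdiv : (a / b) ^ s = a ^ s / b ^ s := Real.div_rpow ha hb.le s
    have hbs : (0 : ℝ) < b ^ s := Real.rpow_pos_of_pos hb s
    have h1 : b ^ s - a ^ s ≤ b ^ s * (s * (1 - a / b)) := by
      have := mul_le_mul_of_nonneg_left hbern hbs.le
      rw [hdiv] at this
      have : b ^ s * (1 + s * (a / b - 1)) ≤ a ^ s := by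
        rwa [mul_div_cancel₀ _ hbs.ne'] at this
      nlinarith
    have h2 : b ^ s * (s * (1 - a / b)) = s * b ^ (s - 1) * (b - a) := by
      rw [Real.rpow_sub hb, Real.rpow_one]
      field_simp
    linarith [h1, h2 ▸ h1]

/-- Mean value type inequality for rpow with abs. -/
lemma abs_rpow_sub_rpow_le_aux {a b s : ℝ} (ha : 0 ≤ a) (hb : 0 ≤ b) (hs : 1 ≤ s) :
    |a ^ s - b ^ s| ≤ s * max a b ^ (s - 1) * |a - b| := by
  have hs0 : 0 < s := lt_of_lt_of_le one_pos hs
  rcases le_total a b with h | h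
  · rw [max_eq_right h, abs_sub_comm, abs_of_nonneg (by linarith [Real.rpow_le_rpow ha h hs0.le] :
      (0:ℝ) ≤ b ^ s - a ^ s), abs_sub_comm, abs_of_nonneg (by linarith : (0:ℝ) ≤ b - a)]
    exact rpow_sub_rpow_le_aux ha h hs
  · rw [max_eq_left h, abs_of_nonneg (by linarith [Real.rpow_le_rpow hb h hs0.le] :
      (0:ℝ) ≤ a ^ s - b ^ s), abs_of_nonneg (by linarith : (0:ℝ) ≤ a - b)]
    exact rpow_sub_rpow_le_aux hb h hs

/-- Suppose `γ > 2` satisfies `2^k < γ ≤ 2^(k+1)` for some positive integer `k`.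
Then the Hellinger distance is bounded as `D_H(P,Q) ≤ 2^k * D_{γ,H}(P,Q)`, where
`D_{γ,H}(P,Q) = ((1/2) ∫ |p^(1/γ) - q^(1/γ)|^γ dμ)^(1/γ)` and `D_H = D_{2,H}`. -/
theorem hellinger_le_pow_two_mul_generalizedHellinger
    {X : Type*} [MeasurableSpace X] (μ : Measure X) [SigmaFinite μ]
    (p q : X → ℝ) (hpm : Measurable p) (hqm : Measurable q)
    (hp0 : ∀ x, 0 ≤ p x) (hq0 : ∀ x, 0 ≤ q x)
    (hp1 : ∫ x, p x ∂μ = 1) (hq1 : ∫ x, q x ∂μ = 1)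
    (γ : ℝ) (k : ℕ) (hk : 0 < k)
    (hγlow : (2 : ℝ) ^ k < γ) (hγhigh : γ ≤ (2 : ℝ) ^ (k + 1)) :
    ((1 / 2) * ∫ x, |p x ^ ((1 : ℝ) / 2) - q x ^ ((1 : ℝ) / 2)| ^ (2 : ℝ) ∂μ) ^ ((1 : ℝ) / 2)
      ≤ (2 : ℝ) ^ k *
        ((1 / 2) * ∫ x, |p x ^ (1 / γ) - q x ^ (1 / γ)| ^ γ ∂μ) ^ (1 / γ) := by
  -- basic facts about γ
  have h2k : (2 : ℝ) ≤ (2 : ℝ) ^ k := by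
    calc (2:ℝ) = 2 ^ 1 := (pow_one 2).symm
    _ ≤ 2 ^ k := pow_le_pow_right₀ (by norm_num) hk
  have hγ2 : (2 : ℝ) < γ := lt_of_le_of_lt h2k hγlow
  have hγ0 : (0 : ℝ) < γ := by linarith
  have hγ2' : (0 : ℝ) < γ - 2 := by linarith
  -- the functions u, v, m
  set u : X → ℝ := fun x => p x ^ (1 / γ) with hu
  set v : X → ℝ := fun x => q x ^ (1 / γ) with hv
  set m : X → ℝ := fun x => max (u x) (v x) with hm
  have hu0 : ∀ x, 0 ≤ u x := fun x => Real.rpow_nonneg (hp0 x) _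
  have hv0 : ∀ x, 0 ≤ v x := fun x => Real.rpow_nonneg (hq0 x) _
  have hm0 : ∀ x, 0 ≤ m x := fun x => le_max_of_le_left (hu0 x)
  have hup : ∀ x, u x ^ γ = p x := by
    intro x
    simp only [hu]
    rw [← Real.rpow_mul (hp0 x), one_div_mul_cancel hγ0.ne', Real.rpow_one]

  have hvq : ∀ x, v x ^ γ = q x := by
    intro x
    simp only [hv]
    rw [← Real.rpow_mul (hq0 x), one_div_mul_cancel hγ0.ne', Real.rpow_one]
  have hmγ : ∀ x, m x ^ γ ≤ p x + q x := by
    intro x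
    rcases le_total (u x) (v x) with h | h
    · have hme : m x = v x := max_eq_right h
      rw [hme, hvq x]; linarith [hp0 x]
    · have hme : m x = u x := max_eq_left h
      rw [hme, hup x]; linarith [hq0 x]
  -- integrability
  have hpInt : Integrable p μ := by
    by_contra h; rw [integral_undef h] at hp1; norm_num at hp1
  have hqInt : Integrable q μ := by
    by_contra h; rw [integral_undef h] at hq1; norm_num at hq1
  have hwInt : Integrable (fun x => p x + q x) μ := hpInt.add hqInt
  have hum : Measurable u := hpm.pow measurable_const
  have hvm : Measurable v := hqm.pow measurable_const
  have hmm : Measurable m := hum.max hvm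
  have habs_le : ∀ x, |u x - v x| ≤ m x := by
    intro x
    have h1 : u x ≤ m x := le_max_left _ _
    have h2 : v x ≤ m x := le_max_right _ _
    rw [abs_sub_le_iff]
    constructor <;> [linarith [hv0 x]; linarith [hu0 x]]
  have hJ0 : ∀ x, 0 ≤ |u x - v x| ^ γ := fun x => Real.rpow_nonneg (abs_nonneg _) _
  have hJle : ∀ x, |u x - v x| ^ γ ≤ p x + q x := fun x =>
    (Real.rpow_le_rpow (abs_nonneg _) (habs_le x) hγ0.le).trans (hmγ x)
  have hJInt : Integrable (fun x => |u x - v x| ^ γ) μ := by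
    refine hwInt.mono' (((hum.sub hvm).abs.pow measurable_const).aestronglyMeasurable) ?_
    exact ae_of_all _ fun x => by rw [Real.norm_of_nonneg (hJ0 x)]; exact hJle x
  have hmγInt : Integrable (fun x => m x ^ γ) μ := by
    refine hwInt.mono' ((hmm.pow measurable_const).aestronglyMeasurable) ?_
    exact ae_of_all _ fun x => by
      rw [Real.norm_of_nonneg (Real.rpow_nonneg (hm0 x) _)]; exact hmγ x
  have hfg_le : ∀ x, m x ^ (γ - 2) * (u x - v x) ^ 2 ≤ p x + q x := by
    intro x
    have h1 : (u x - v x) ^ 2 ≤ m x ^ 2 := by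
      have h2 := habs_le x
      nlinarith [abs_nonneg (u x - v x), sq_abs (u x - v x)]
    calc m x ^ (γ - 2) * (u x - v x) ^ 2 ≤ m x ^ (γ - 2) * m x ^ 2 :=
          mul_le_mul_of_nonneg_left h1 (Real.rpow_nonneg (hm0 x) _)
    _ = m x ^ γ := by
          rw [← Real.rpow_natCast (m x) 2,
            ← Real.rpow_add' (hm0 x) (by push_cast; linarith),
            show (γ - 2) + ((2:ℕ):ℝ) = γ by push_cast; ring]
    _ ≤ p x + q x := hmγ x
  have hfgInt : Integrable (fun x => m x ^ (γ - 2) * (u x - v x) ^ 2) μ := by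
    refine hwInt.mono' ((hmm.pow measurable_const).mul ((hum.sub hvm).pow_const 2)).aestronglyMeasurable ?_
    exact ae_of_all _ fun x => by
      rw [Real.norm_of_nonneg (mul_nonneg (Real.rpow_nonneg (hm0 x) _) (sq_nonneg _))]
      exact hfg_le x
  -- pointwise inequality
  have hpoint : ∀ x, |p x ^ ((1:ℝ)/2) - q x ^ ((1:ℝ)/2)| ^ (2:ℝ)
      ≤ (γ/2)^2 * (m x ^ (γ - 2) * (u x - v x) ^ 2) := by
    intro x
    have hs : 1 ≤ γ / 2 := by linarith
    have hps : p x ^ ((1:ℝ)/2) = u x ^ (γ/2) := by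
      simp only [hu]
      rw [← Real.rpow_mul (hp0 x)]
      congr 1
      field_simp
    have hqs : q x ^ ((1:ℝ)/2) = v x ^ (γ/2) := by
      simp only [hv]
      rw [← Real.rpow_mul (hq0 x)]
      congr 1
      field_simp
    have key := abs_rpow_sub_rpow_le_aux (hu0 x) (hv0 x) hs
    have habs2 : |p x ^ ((1:ℝ)/2) - q x ^ ((1:ℝ)/2)| ^ (2:ℝ)
        = |u x ^ (γ/2) - v x ^ (γ/2)| ^ 2 := by
      rw [hps, hqs, show (2:ℝ) = ((2:ℕ):ℝ) by norm_num, Real.rpow_natCast]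
    rw [habs2]
    have hA : (m x ^ (γ/2 - 1)) ^ 2 = m x ^ (γ - 2) := by
      rw [← Real.rpow_natCast (m x ^ (γ/2 - 1)) 2, ← Real.rpow_mul (hm0 x),
        show (γ/2 - 1) * ((2:ℕ):ℝ) = γ - 2 by push_cast; ring]
    calc |u x ^ (γ/2) - v x ^ (γ/2)| ^ 2
        ≤ (γ/2 * m x ^ (γ/2 - 1) * |u x - v x|) ^ 2 :=
          pow_le_pow_left₀ (abs_nonneg _) key 2
    _ = (γ/2)^2 * (m x ^ (γ - 2) * (u x - v x) ^ 2) := by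
          rw [mul_pow, mul_pow, sq_abs, hA]
          ring
  -- step 1
  have hLnn : ∀ x, (0:ℝ) ≤ |p x ^ ((1:ℝ)/2) - q x ^ ((1:ℝ)/2)| ^ (2:ℝ) :=
    fun x => Real.rpow_nonneg (abs_nonneg _) _
  have hstep1 : (∫ x, |p x ^ ((1:ℝ)/2) - q x ^ ((1:ℝ)/2)| ^ (2:ℝ) ∂μ)
      ≤ (γ/2)^2 * ∫ x, m x ^ (γ - 2) * (u x - v x) ^ 2 ∂μ := by
    rw [← integral_const_mul]
    exact integral_mono_of_nonneg (ae_of_all _ hLnn) (hfgInt.const_mul _) (ae_of_all _ hpoint)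
  -- Hölder
  have hconj : Real.HolderConjugate (γ/(γ-2)) (γ/2) := by
    rw [Real.holderConjugate_iff]
    constructor
    · rw [lt_div_iff₀ hγ2']; linarith
    · rw [inv_div, inv_div]
      field_simp
      ring
  have hr0 : (0:ℝ) < γ/(γ-2) := by positivity
  have hs0 : (0:ℝ) < γ/2 := by positivity
  have e1 : ∀ x, (m x ^ (γ-2)) ^ (γ/(γ-2)) = m x ^ γ := by
    intro x
    rw [← Real.rpow_mul (hm0 x)]
    congr 1
    field_simp
  have e2 : ∀ x, ((u x - v x) ^ 2 : ℝ) ^ (γ/2) = |u x - v x| ^ γ := by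
    intro x
    rw [← sq_abs, ← Real.rpow_natCast |u x - v x| 2, ← Real.rpow_mul (abs_nonneg _),
      show ((2:ℕ):ℝ) * (γ/2) = γ by push_cast; ring]
  have hfmem : MemLp (fun x => m x ^ (γ-2)) (ENNReal.ofReal (γ/(γ-2))) μ := by
    have hne : ENNReal.ofReal (γ/(γ-2)) ≠ 0 := by
      simp [ENNReal.ofReal_eq_zero, not_le, hr0]
    have h1 : MemLp (fun x => ‖m x ^ (γ-2)‖ ^ (ENNReal.ofReal (γ/(γ-2))).toReal)
        (ENNReal.ofReal (γ/(γ-2)) / ENNReal.ofReal (γ/(γ-2))) μ := by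
      rw [ENNReal.div_self hne ENNReal.ofReal_ne_top, ENNReal.toReal_ofReal hr0.le,
        memLp_one_iff_integrable]
      have heq : (fun x => ‖m x ^ (γ-2)‖ ^ (γ/(γ-2))) = fun x => m x ^ γ := by
        funext x
        rw [Real.norm_of_nonneg (Real.rpow_nonneg (hm0 x) _), e1 x]
      rw [heq]
      exact hmγInt
    exact (memLp_norm_rpow_iff ((hmm.pow measurable_const).aestronglyMeasurable) hne
      ENNReal.ofReal_ne_top).mp h1
  have hgmem : MemLp (fun x => (u x - v x) ^ 2) (ENNReal.ofReal (γ/2)) μ := by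
    have hne : ENNReal.ofReal (γ/2) ≠ 0 := by
      simp [ENNReal.ofReal_eq_zero, not_le, hs0]
    have h1 : MemLp (fun x => ‖(u x - v x) ^ 2‖ ^ (ENNReal.ofReal (γ/2)).toReal)
        (ENNReal.ofReal (γ/2) / ENNReal.ofReal (γ/2)) μ := by
      rw [ENNReal.div_self hne ENNReal.ofReal_ne_top, ENNReal.toReal_ofReal hs0.le,
        memLp_one_iff_integrable]
      have heq : (fun x => ‖(u x - v x) ^ 2‖ ^ (γ/2)) = fun x => |u x - v x| ^ γ := by
        funext x
        rw [Real.norm_of_nonneg (sq_nonneg _), e2 x]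
      rw [heq]
      exact hJInt
    exact (memLp_norm_rpow_iff (((hum.sub hvm).pow_const 2).aestronglyMeasurable) hne
      ENNReal.ofReal_ne_top).mp h1
  have hholder := integral_mul_le_Lp_mul_Lq_of_nonneg hconj
    (ae_of_all _ fun x => Real.rpow_nonneg (hm0 x) (γ-2))
    (ae_of_all _ fun x => sq_nonneg (u x - v x)) hfmem hgmem
  simp only [e1, e2, one_div_div] at hholder
  -- hholder : ∫ fg ≤ (∫ m^γ)^((γ-2)/γ) * (∫ |u-v|^γ)^(2/γ)
  have hm2 : ∫ x, m x ^ γ ∂μ ≤ 2 := by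
    have h := integral_mono_of_nonneg
      (ae_of_all _ fun x => Real.rpow_nonneg (hm0 x) γ) hwInt (ae_of_all _ hmγ)
    rwa [integral_add hpInt hqInt, hp1, hq1, show (1:ℝ) + 1 = 2 by norm_num] at h
  set J := ∫ x, |u x - v x| ^ γ ∂μ with hJdef
  set A := ∫ x, |p x ^ ((1:ℝ)/2) - q x ^ ((1:ℝ)/2)| ^ (2:ℝ) ∂μ with hAdef
  have hJnn : 0 ≤ J := integral_nonneg hJ0
  have hAnn : 0 ≤ A := integral_nonneg hLnn
  have ht : 0 ≤ J ^ (2/γ) := Real.rpow_nonneg hJnn _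
  have hH2 : (∫ x, m x ^ (γ-2) * (u x - v x) ^ 2 ∂μ) ≤ 2 ^ ((γ-2)/γ) * J ^ (2/γ) := by
    refine hholder.trans (mul_le_mul_of_nonneg_right ?_ ht)
    exact Real.rpow_le_rpow (integral_nonneg fun x => Real.rpow_nonneg (hm0 x) γ) hm2
      (by positivity)
  have hc : (0:ℝ) < ((2:ℝ) ^ (2/γ))⁻¹ := by positivity
  have c2 : (2:ℝ) ^ ((γ-2)/γ) = 2 * ((2:ℝ) ^ (2/γ))⁻¹ := by
    rw [show (γ-2)/γ = 1 + -(2/γ) by field_simp; ring,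
      Real.rpow_add (by norm_num : (0:ℝ) < 2), Real.rpow_one,
      Real.rpow_neg (by norm_num : (0:ℝ) ≤ 2)]
  have h4 : ((1/2) * J) ^ (2/γ) = ((2:ℝ) ^ (2/γ))⁻¹ * J ^ (2/γ) := by
    rw [Real.mul_rpow (by norm_num) hJnn, one_div,
      Real.inv_rpow (by norm_num : (0:ℝ) ≤ 2)]
  have hγk : γ/2 ≤ (2:ℝ)^k := by
    rw [pow_succ] at hγhigh; linarith
  have h3 : A ≤ (γ/2)^2 * (2 * (((2:ℝ) ^ (2/γ))⁻¹ * J ^ (2/γ))) := by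
    refine hstep1.trans ?_
    rw [c2] at hH2
    have := mul_le_mul_of_nonneg_left hH2 (sq_nonneg (γ/2))
    linarith [this]
  have h5 : (γ/2)^2 * (((2:ℝ) ^ (2/γ))⁻¹ * J ^ (2/γ))
      ≤ ((2:ℝ)^k)^2 * (((2:ℝ) ^ (2/γ))⁻¹ * J ^ (2/γ)) :=
    mul_le_mul_of_nonneg_right (pow_le_pow_left₀ (by positivity) hγk 2)
      (mul_nonneg hc.le ht)
  have key : (1/2) * A ≤ ((2:ℝ)^k)^2 * ((1/2) * J) ^ (2/γ) := by
    rw [h4]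
    have h6 : (1/2) * ((γ/2)^2 * (2 * (((2:ℝ) ^ (2/γ))⁻¹ * J ^ (2/γ))))
        = (γ/2)^2 * (((2:ℝ) ^ (2/γ))⁻¹ * J ^ (2/γ)) := by ring
    linarith
  have hhalfJ : (0:ℝ) ≤ (1/2) * J := by linarith
  have hfinal := Real.rpow_le_rpow (by linarith : (0:ℝ) ≤ (1/2) * A) key
    (by norm_num : (0:ℝ) ≤ (1:ℝ)/2)
  rw [Real.mul_rpow (by positivity) (Real.rpow_nonneg hhalfJ _)] at hfinal
  have e3 : ((((2:ℝ)^k)^2) : ℝ) ^ ((1:ℝ)/2) = (2:ℝ)^k := by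
    rw [← Real.rpow_natCast ((2:ℝ)^k) 2, ← Real.rpow_mul (by positivity)]
    norm_num
  have e4 : (((1/2) * J) ^ (2/γ)) ^ ((1:ℝ)/2) = ((1/2) * J) ^ (1/γ) := by
    rw [← Real.rpow_mul hhalfJ]
    congr 1
    ring
  rw [e3, e4] at hfinal
  exact hfinal
end

section
/- Let N ~ Poisson(n) with n ≥ 1 and let ε > 0. Then n · E[(N+1)^{-ε-1}] ≤ n·exp(-n/12) + 2^{1+ε} n^{-ε}. -/
open MeasureTheory

/-- Chernoff-type tail bound for the Poisson lower tail. -/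
lemma poisson_lower_tail {Ω : Type*} [MeasurableSpace Ω] (μ : Measure Ω)
    [IsProbabilityMeasure μ] (N : Ω → ℕ) (hNm : Measurable N) (n : ℕ) (hn : 1 ≤ n)
    (hN : ∀ k : ℕ, μ {ω | N ω = k}
      = ENNReal.ofReal (Real.exp (-(n : ℝ)) * (n : ℝ) ^ k / k.factorial)) :
    (μ {ω | 2 * N ω ≤ n}).toReal ≤ Real.exp (-(n : ℝ) / 12) := by
  have hset : {ω | 2 * N ω ≤ n} = ⋃ k ∈ Finset.range (n / 2 + 1), {ω | N ω = k} := by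
    ext ω
    simp only [Set.mem_setOf_eq, Set.mem_iUnion, Finset.mem_range, Nat.lt_succ_iff]
    constructor
    · intro h
      exact ⟨N ω, by omega, rfl⟩
    · rintro ⟨k, hk, rfl⟩
      omega
  have hdisj : (↑(Finset.range (n / 2 + 1)) : Set ℕ).PairwiseDisjoint
      (fun k => {ω | N ω = k}) := by
    intro a _ b _ hab
    refine Set.disjoint_left.2 fun ω ha hb => ?_
    exact hab (ha.symm.trans hb)
  have hmeas : ∀ k ∈ Finset.range (n / 2 + 1), MeasurableSet {ω | N ω = k} := by
    intro k _
    exact hNm (measurableSet_singleton k)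
  have hμ : μ {ω | 2 * N ω ≤ n}
      = ∑ k ∈ Finset.range (n / 2 + 1),
        ENNReal.ofReal (Real.exp (-(n : ℝ)) * (n : ℝ) ^ k / k.factorial) := by
    rw [hset, measure_biUnion_finset hdisj hmeas]
    exact Finset.sum_congr rfl fun k _ => hN k
  have hterm_nonneg : ∀ k : ℕ,
      0 ≤ Real.exp (-(n : ℝ)) * (n : ℝ) ^ k / k.factorial := fun k => by positivity
  rw [hμ, ← ENNReal.ofReal_sum_of_nonneg (fun k _ => hterm_nonneg k),
    ENNReal.toReal_ofReal (Finset.sum_nonneg fun k _ => hterm_nonneg k)]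
  -- Now a purely real estimate
  have hstep : ∀ k ∈ Finset.range (n / 2 + 1),
      Real.exp (-(n : ℝ)) * (n : ℝ) ^ k / k.factorial
        ≤ Real.exp (-(n : ℝ)) * ((2 : ℝ) ^ ((n : ℝ) / 2) * (((n : ℝ) / 2) ^ k / k.factorial)) := by
    intro k hk
    rw [Finset.mem_range, Nat.lt_succ_iff] at hk
    have hk2 : (k : ℝ) ≤ (n : ℝ) / 2 := by
      have h2kn : 2 * k ≤ n := by omega
      rw [le_div_iff₀ (by norm_num : (0:ℝ) < 2)]
      push_cast
      have hc : (2:ℝ) * k ≤ n := by exact_mod_cast h2kn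
      linarith
    have h2k : (2 : ℝ) ^ (k : ℕ) ≤ (2 : ℝ) ^ ((n : ℝ) / 2) := by
      rw [← Real.rpow_natCast 2 k]
      exact Real.rpow_le_rpow_left_iff (by norm_num) |>.2 hk2
    have hbase : (n : ℝ) ^ k ≤ (2 : ℝ) ^ ((n : ℝ) / 2) * ((n : ℝ) / 2) ^ k := by
      have : (n : ℝ) ^ k = (2 : ℝ) ^ k * ((n : ℝ) / 2) ^ k := by
        rw [← mul_pow]; ring_nf
      rw [this]
      have hnn : (0 : ℝ) ≤ ((n : ℝ) / 2) ^ k := by positivity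
      exact mul_le_mul_of_nonneg_right h2k hnn
    have heq : Real.exp (-(n : ℝ)) * ((2 : ℝ) ^ ((n : ℝ) / 2) * (((n : ℝ) / 2) ^ k / k.factorial))
        = Real.exp (-(n : ℝ)) * ((2 : ℝ) ^ ((n : ℝ) / 2) * ((n : ℝ) / 2) ^ k) / k.factorial := by
      ring
    rw [heq]
    gcongr
  have hsum := Finset.sum_le_sum hstep
  refine hsum.trans ?_
  rw [← Finset.mul_sum, ← Finset.mul_sum]
  have hexp : ∑ k ∈ Finset.range (n / 2 + 1), ((n : ℝ) / 2) ^ k / k.factorial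
      ≤ Real.exp ((n : ℝ) / 2) :=
    Real.sum_le_exp_of_nonneg (by positivity) _
  have h2pow : (2 : ℝ) ^ ((n : ℝ) / 2) = Real.exp ((n : ℝ) / 2 * Real.log 2) := by
    rw [Real.rpow_def_of_pos (by norm_num)]; ring_nf
  calc Real.exp (-(n : ℝ)) * ((2 : ℝ) ^ ((n : ℝ) / 2)
          * ∑ k ∈ Finset.range (n / 2 + 1), ((n : ℝ) / 2) ^ k / k.factorial)
      ≤ Real.exp (-(n : ℝ)) * ((2 : ℝ) ^ ((n : ℝ) / 2) * Real.exp ((n : ℝ) / 2)) := by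
        apply mul_le_mul_of_nonneg_left _ (Real.exp_nonneg _)
        exact mul_le_mul_of_nonneg_left hexp (by positivity)
    _ = Real.exp (-(n : ℝ) + ((n : ℝ) / 2 * Real.log 2 + (n : ℝ) / 2)) := by
        rw [h2pow, ← Real.exp_add, ← Real.exp_add]
    _ ≤ Real.exp (-(n : ℝ) / 12) := by
        apply Real.exp_le_exp.2
        have hlog : Real.log 2 < 0.6931471808 := Real.log_two_lt_d9
        have hn0 : (0 : ℝ) ≤ (n : ℝ) := Nat.cast_nonneg n
        nlinarith

/-- Let `N ~ Poisson(n)` with `n ≥ 1` and let `ε > 0`.  Then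
`n · E[(N+1)^(-ε-1)] ≤ n·exp(-n/12) + 2^(1+ε) · n^(-ε)`. -/
theorem poisson_reciprocal_moment_bound
    {Ω : Type*} [MeasurableSpace Ω] (μ : Measure Ω) [IsProbabilityMeasure μ]
    (N : Ω → ℕ) (hNm : Measurable N) (n : ℕ) (hn : 1 ≤ n) (ε : ℝ) (hε : 0 < ε)
    (hN : ∀ k : ℕ, μ {ω | N ω = k}
      = ENNReal.ofReal (Real.exp (-(n : ℝ)) * (n : ℝ) ^ k / k.factorial)) :
    (n : ℝ) * ∫ ω, ((N ω : ℝ) + 1) ^ (-ε - 1) ∂μ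
      ≤ (n : ℝ) * Real.exp (-(n : ℝ) / 12) + 2 ^ (1 + ε) * (n : ℝ) ^ (-ε) := by
  set f : Ω → ℝ := fun ω => ((N ω : ℝ) + 1) ^ (-ε - 1) with hf
  have hnR : (0 : ℝ) < (n : ℝ) := by exact_mod_cast hn
  have hfm : Measurable f := by
    rw [hf]
    measurability
  have hf_nonneg : ∀ ω, 0 ≤ f ω := fun ω => by
    simp only [hf]
    positivity
  have hf_le_one : ∀ ω, f ω ≤ 1 := fun ω => by
    simp only [hf]
    refine Real.rpow_le_one_of_one_le_of_nonpos ?_ (by linarith)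
    have := Nat.cast_nonneg (N ω) (α := ℝ)
    linarith
  have hint : Integrable f μ := by
    refine (integrable_const (1 : ℝ)).mono' hfm.aestronglyMeasurable
      (Filter.Eventually.of_forall fun ω => ?_)
    rw [Real.norm_eq_abs, abs_of_nonneg (hf_nonneg ω)]
    exact hf_le_one ω
  set A : Set Ω := {ω | 2 * N ω ≤ n} with hA
  have hAm : MeasurableSet A := by
    have hpre : A = N ⁻¹' {k | 2 * k ≤ n} := rfl
    rw [hpre]
    exact hNm .of_discrete
  have hsplit : ∫ ω, f ω ∂μ = ∫ ω in A, f ω ∂μ + ∫ ω in Aᶜ, f ω ∂μ :=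
    (integral_add_compl hAm hint).symm
  -- bound on A
  have hboundA : ∫ ω in A, f ω ∂μ ≤ Real.exp (-(n : ℝ) / 12) := by
    have h1 : ‖∫ ω in A, f ω ∂μ‖ ≤ 1 * (μ A).toReal :=
      norm_setIntegral_le_of_norm_le_const (measure_lt_top μ A)
        (fun ω _ => by rw [Real.norm_eq_abs, abs_of_nonneg (hf_nonneg ω)]; exact hf_le_one ω)
    have h2 := poisson_lower_tail μ N hNm n hn hN
    calc ∫ ω in A, f ω ∂μ ≤ ‖∫ ω in A, f ω ∂μ‖ := Real.le_norm_self _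
      _ ≤ 1 * (μ A).toReal := h1
      _ = (μ A).toReal := one_mul _
      _ ≤ Real.exp (-(n : ℝ) / 12) := h2
  -- bound on Aᶜ
  have hcpos : (0 : ℝ) < ((n : ℝ) / 2) ^ (-ε - 1) := Real.rpow_pos_of_pos (by positivity) _
  have hboundAc : ∫ ω in Aᶜ, f ω ∂μ ≤ ((n : ℝ) / 2) ^ (-ε - 1) := by
    have hptwise : ∀ ω ∈ Aᶜ, ‖f ω‖ ≤ ((n : ℝ) / 2) ^ (-ε - 1) := by
      intro ω hω
      rw [Real.norm_eq_abs, abs_of_nonneg (hf_nonneg ω)]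
      have : ¬ (2 * N ω ≤ n) := hω
      have hge : (n : ℝ) / 2 ≤ (N ω : ℝ) + 1 := by
        have h2 : n ≤ 2 * N ω := by omega
        rw [div_le_iff₀ (by norm_num : (0:ℝ) < 2)]
        push_cast
        have hc : (n:ℝ) ≤ 2 * N ω := by exact_mod_cast h2
        linarith
      simp only [hf]
      exact Real.rpow_le_rpow_of_nonpos (by positivity) hge (by linarith)
    have h1 : ‖∫ ω in Aᶜ, f ω ∂μ‖ ≤ ((n : ℝ) / 2) ^ (-ε - 1) * (μ Aᶜ).toReal :=
      norm_setIntegral_le_of_norm_le_const (measure_lt_top μ Aᶜ) hptwise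
    have hμAc : (μ Aᶜ).toReal ≤ 1 := by
      have h := ENNReal.toReal_mono ENNReal.one_ne_top (prob_le_one (μ := μ) (s := Aᶜ))
      simpa using h
    calc ∫ ω in Aᶜ, f ω ∂μ ≤ ‖∫ ω in Aᶜ, f ω ∂μ‖ := Real.le_norm_self _
      _ ≤ ((n : ℝ) / 2) ^ (-ε - 1) * (μ Aᶜ).toReal := h1
      _ ≤ ((n : ℝ) / 2) ^ (-ε - 1) * 1 := mul_le_mul_of_nonneg_left hμAc hcpos.le
      _ = ((n : ℝ) / 2) ^ (-ε - 1) := mul_one _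
  -- combine
  have hkey : (n : ℝ) * (((n : ℝ) / 2) ^ (-ε - 1)) = 2 ^ (1 + ε) * (n : ℝ) ^ (-ε) := by
    have h1 : ((n : ℝ) / 2) ^ (-ε - 1) = (n : ℝ) ^ (-ε - 1) / (2 : ℝ) ^ (-ε - 1) :=
      Real.div_rpow hnR.le (by norm_num) _
    have h3 : (n : ℝ) * (n : ℝ) ^ (-ε - 1) = (n : ℝ) ^ (-ε) := by
      nth_rewrite 1 [← Real.rpow_one (n : ℝ)]
      rw [← Real.rpow_add hnR]
      ring_nf
    have h4 : (2 : ℝ) ^ (1 + ε) = ((2 : ℝ) ^ (-ε - 1))⁻¹ := by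
      rw [← Real.rpow_neg (by norm_num : (0:ℝ) ≤ 2)]
      ring_nf
    rw [h1, mul_div_assoc', h3, h4, div_eq_mul_inv, mul_comm]
  calc (n : ℝ) * ∫ ω, f ω ∂μ
      = (n : ℝ) * (∫ ω in A, f ω ∂μ + ∫ ω in Aᶜ, f ω ∂μ) := by rw [hsplit]
    _ ≤ (n : ℝ) * (Real.exp (-(n : ℝ) / 12) + ((n : ℝ) / 2) ^ (-ε - 1)) := by
        apply mul_le_mul_of_nonneg_left _ hnR.le
        exact add_le_add hboundA hboundAc
    _ = (n : ℝ) * Real.exp (-(n : ℝ) / 12) + (n : ℝ) * (((n : ℝ) / 2) ^ (-ε - 1)) := by ring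
    _ = (n : ℝ) * Real.exp (-(n : ℝ) / 12) + 2 ^ (1 + ε) * (n : ℝ) ^ (-ε) := by rw [hkey]
end
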